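/- Fix integers ν ≥ 2 and k ≥ 1, and real numbers a_ℓ (ℓ ∈ ℤ) with a_ℓ = 0 for ℓ < 0 and for ℓ ≥ 3k. With a_ℓ^{(j)} and P_j^{(n,k)} defined by the recursions in the context, the following vanishing identity holds: for every integer n ≥ 1 and every integer m with 0 ≤ m ≤ n−1, Σ_{j=0}^{n} P_j^{(n,k)} · Σ_{r=0}^{m} (−1)^{j−r} · binom(j, r) · a_{m−r}^{(j)} = 0. -/

import Mathlib

open Polynomial Finset

/-- The integers `P_j^{(n,k)}` (for fixed parameters `ν, k`), defined by
`P_0^{(0,k)} = 1`, `P_j^{(n,k)} = 0` for `j < 0` or `j > n`, and for `n ≥ 1`,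
`P_j^{(n,k)} = P_{j−1}^{(n−1,k)} + ((ν−1)j − (2k−2+n))·P_j^{(n−1,k)}`. -/
def Pcoeff (ν k : ℕ) : ℕ → ℤ → ℤ
  | 0, j => if j = 0 then 1 else 0
  | n + 1, j =>
      if j < 0 ∨ ((n : ℤ) + 1) < j then 0
      else Pcoeff ν k n (j - 1) +
        (((ν : ℤ) - 1) * j - (2 * (k : ℤ) - 2 + ((n : ℤ) + 1))) * Pcoeff ν k n j

lemma Pneg (ν k : ℕ) (n : ℕ) (j : ℤ) (h : j < 0) : Pcoeff ν k n j = 0 := by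
  cases n with
  | zero => simp only [Pcoeff]; rw [if_neg]; omega
  | succ n => simp only [Pcoeff]; rw [if_pos]; left; exact h

lemma Ptop (ν k : ℕ) (n : ℕ) (j : ℤ) (h : (n : ℤ) < j) : Pcoeff ν k n j = 0 := by
  cases n with
  | zero => simp only [Pcoeff]; rw [if_neg]; omega
  | succ n => simp only [Pcoeff]; rw [if_pos]; right; exact h

/-- The polynomial `f_j = ∑_ℓ a_ℓ^{(j)} X^{2k-1+ℓ}` (with `k = K+1`),
defined via the differential recursion. -/
noncomputable def fpoly (ν K : ℕ) (a : ℤ → ℝ) : ℕ → ℝ[X]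
  | 0 => ∑ ℓ ∈ Finset.range (3 * (K + 1)), C (a (ℓ : ℤ)) * X ^ (2 * K + 1 + ℓ)
  | (j + 1) =>
      X * (C (ν : ℝ) * X - 1) * derivative (fpoly ν K a j)
        + (C ((j : ℝ) * ((ν : ℝ) - 1)) + C ((ν : ℝ) * ((j : ℝ) + 1)) * X) * fpoly ν K a j

lemma Aneg (ν k : ℕ) (a : ℤ → ℝ) (A : ℕ → ℤ → ℝ)
    (hA0 : A 0 = a) (ha0 : ∀ ℓ : ℤ, ℓ < 0 → a ℓ = 0)
    (hArec : ∀ (j : ℕ) (ℓ : ℤ), A (j + 1) ℓ =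
      (((j : ℤ) * ν - (2 * (k : ℤ) + ℓ + ((j : ℤ) + 1) - 2) : ℤ) : ℝ) * A j ℓ
        + (ν : ℝ) * ((2 * (k : ℤ) + ℓ + ((j : ℤ) + 1) - 2 : ℤ) : ℝ) * A j (ℓ - 1)) :
    ∀ (j : ℕ) (ℓ : ℤ), ℓ < 0 → A j ℓ = 0 := by
  intro j
  induction j with
  | zero => intro ℓ hℓ; rw [hA0]; exact ha0 ℓ hℓ
  | succ j ih =>
    intro ℓ hℓ
    rw [hArec, ih ℓ hℓ, ih (ℓ - 1) (by omega)]
    ring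

lemma coeff_fpoly (ν k K : ℕ) (a : ℤ → ℝ) (A : ℕ → ℤ → ℝ)
    (hkK : (k : ℤ) = (K : ℤ) + 1)
    (ha : ∀ ℓ : ℤ, ℓ < 0 ∨ 3 * ((K : ℤ) + 1) ≤ ℓ → a ℓ = 0)
    (hA0 : A 0 = a)
    (hArec : ∀ (j : ℕ) (ℓ : ℤ), A (j + 1) ℓ =
      (((j : ℤ) * ν - (2 * (k : ℤ) + ℓ + ((j : ℤ) + 1) - 2) : ℤ) : ℝ) * A j ℓ
        + (ν : ℝ) * ((2 * (k : ℤ) + ℓ + ((j : ℤ) + 1) - 2 : ℤ) : ℝ) * A j (ℓ - 1))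
    (hAneg : ∀ (j : ℕ) (ℓ : ℤ), ℓ < 0 → A j ℓ = 0) :
    ∀ (j : ℕ) (t : ℕ), (fpoly ν K a j).coeff t = A j ((t : ℤ) - (2 * K + 1)) := by
  intro j
  induction j with
  | zero =>
    intro t
    rw [hA0]
    rw [show fpoly ν K a 0
      = ∑ ℓ ∈ Finset.range (3 * (K + 1)), C (a (ℓ : ℤ)) * X ^ (2 * K + 1 + ℓ) from rfl]
    rw [finset_sum_coeff]
    simp only [coeff_C_mul, coeff_X_pow]
    by_cases h1 : 2 * K + 1 ≤ t ∧ t < 2 * K + 1 + 3 * (K + 1)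
    · obtain ⟨ℓ0, rfl⟩ : ∃ ℓ0, t = 2 * K + 1 + ℓ0 := ⟨t - (2 * K + 1), by omega⟩
      rw [Finset.sum_eq_single ℓ0]
      · simp only [if_pos rfl, mul_one]
        congr 1
        push_cast
        ring
      · intro b _ hne
        rw [if_neg (by omega), mul_zero]
      · intro hmem
        exact absurd (Finset.mem_range.mpr (by omega)) hmem
    · rw [ha _ (by omega)]
      apply Finset.sum_eq_zero
      intro ℓ hℓ
      rw [Finset.mem_range] at hℓ
      rw [if_neg (by omega), mul_zero]
  | succ j ih =>
    intro t
    have hsplit : fpoly ν K a (j + 1)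
        = C (ν : ℝ) * (derivative (fpoly ν K a j) * X ^ 2) - derivative (fpoly ν K a j) * X ^ 1
          + C ((j : ℝ) * ((ν : ℝ) - 1)) * fpoly ν K a j
          + C ((ν : ℝ) * ((j : ℝ) + 1)) * (fpoly ν K a j * X ^ 1) := by
      rw [show fpoly ν K a (j + 1)
        = X * (C (ν : ℝ) * X - 1) * derivative (fpoly ν K a j)
          + (C ((j : ℝ) * ((ν : ℝ) - 1)) + C ((ν : ℝ) * ((j : ℝ) + 1)) * X) * fpoly ν K a j
        from rfl]
      ring
    rw [hsplit]
    simp only [coeff_add, coeff_sub, coeff_C_mul, coeff_mul_X_pow', coeff_derivative, ih,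
      hArec]
    have key : ∀ x y : ℤ, x = y → A j x = A j y := fun x y h => by rw [h]
    have hk2 : (k : ℝ) = (K : ℝ) + 1 := by exact_mod_cast hkK
    match t with
    | 0 =>
      simp only [show ¬ (2 ≤ 0) by omega, show ¬ (1 ≤ 0) by omega, if_neg, reduceIte]
      rw [hAneg j (((0:ℕ):ℤ) - (2 * (K:ℤ) + 1) - 1) (by omega),
        key (((0:ℕ):ℤ) - (2 * (K:ℤ) + 1)) (-(2*(K:ℤ)) - 1) (by push_cast; ring)]
      push_cast [hkK, hk2]
      ring
    | 1 =>
      norm_num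
      rw [hAneg j (-(2*(K:ℤ)) - 1) (by omega), hAneg j (-1 + -(2*(K:ℤ))) (by omega)]
      push_cast [hkK, hk2]
      ring
    | (s + 2) =>
      simp only [show (2:ℕ) ≤ s + 2 by omega, show (1:ℕ) ≤ s + 2 by omega, if_pos,
        show s + 2 - 2 = s from rfl, show s + 2 - 1 = s + 1 from rfl, reduceIte]
      push_cast [hkK, hk2]
      rw [key ((s:ℤ) + 2 - (2*K+1) - 1) ((s:ℤ) + 1 - (2*K+1)) (by ring)]
      ring

/-- `h_j = (X-1)^j f_j`. -/
noncomputable def hpoly (ν K : ℕ) (a : ℤ → ℝ) (j : ℕ) : ℝ[X] :=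
  (X - 1) ^ j * fpoly ν K a j

lemma hpoly_succ (ν K : ℕ) (a : ℤ → ℝ) (j : ℕ) :
    hpoly ν K a (j + 1)
      = X * (X - 1) * (C (ν : ℝ) * X - 1) * derivative (hpoly ν K a j)
        + (C (ν : ℝ) * X * (X - 1) - C (((ν : ℝ) - 1) * (j : ℝ))) * hpoly ν K a j := by
  have hf : fpoly ν K a (j + 1)
      = X * (C (ν : ℝ) * X - 1) * derivative (fpoly ν K a j)
        + (C ((j : ℝ) * ((ν : ℝ) - 1)) + C ((ν : ℝ) * ((j : ℝ) + 1)) * X) * fpoly ν K a j := rfl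
  rw [hpoly, hpoly, hf, derivative_mul, derivative_pow]
  cases j with
  | zero => simp; ring
  | succ s =>
    have hp : ((X : ℝ[X]) - 1) ^ (s + 1) = (X - 1) ^ s * (X - 1) := by ring
    simp only [Nat.add_sub_cancel, derivative_sub, derivative_X, derivative_one, sub_zero,
      mul_one, map_sub, map_mul, map_one]
    rw [hp]
    push_cast
    simp only [map_add, map_mul, map_sub, map_one]
    ring

/-- `G_n = ∑_j P_j^{(n,k)} h_j`. -/
noncomputable def gpoly (ν K : ℕ) (a : ℤ → ℝ) (n : ℕ) : ℝ[X] :=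
  ∑ j ∈ Finset.range (n + 1), C ((Pcoeff ν (K + 1) n (j : ℤ) : ℤ) : ℝ) * hpoly ν K a j

lemma gpoly_succ (ν K : ℕ) (a : ℤ → ℝ) (n : ℕ) :
    gpoly ν K a (n + 1)
      = X * (X - 1) * (C (ν : ℝ) * X - 1) * derivative (gpoly ν K a n)
        + (C (ν : ℝ) * X * (X - 1) - C ((2 * K + n + 1 : ℕ) : ℝ)) * gpoly ν K a n := by
  have hP : ∀ j, j ∈ Finset.range (n + 2) →
      (Pcoeff ν (K + 1) (n + 1) (j : ℤ))
        = Pcoeff ν (K + 1) n ((j : ℤ) - 1)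
          + (((ν : ℤ) - 1) * j - ((2 * K + n + 1 : ℕ) : ℤ)) * Pcoeff ν (K + 1) n j := by
    intro j hj
    rw [Finset.mem_range] at hj
    show Pcoeff ν (K + 1) (n + 1) (j : ℤ) = _
    rw [show Pcoeff ν (K + 1) (n + 1) (j : ℤ)
      = if (j : ℤ) < 0 ∨ ((n : ℤ) + 1) < j then 0
        else Pcoeff ν (K + 1) n ((j : ℤ) - 1) +
          (((ν : ℤ) - 1) * j - (2 * ((K : ℤ) + 1) - 2 + ((n : ℤ) + 1))) * Pcoeff ν (K + 1) n j
      from by rw [Pcoeff]; push_cast; ring_nf]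
    rw [if_neg (by push_cast; omega)]
    congr 2
    push_cast
    ring
  rw [gpoly]
  rw [Finset.sum_congr rfl (fun j hj => by rw [hP j hj])]
  have expand : ∀ j : ℕ,
      C (((Pcoeff ν (K + 1) n ((j : ℤ) - 1)
            + (((ν : ℤ) - 1) * j - ((2 * K + n + 1 : ℕ) : ℤ)) * Pcoeff ν (K + 1) n j : ℤ)) : ℝ)
          * hpoly ν K a j
        = C ((Pcoeff ν (K + 1) n ((j : ℤ) - 1) : ℤ) : ℝ) * hpoly ν K a j
          + (C (((ν : ℝ) - 1) * (j : ℝ)) - C ((2 * K + n + 1 : ℕ) : ℝ))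
            * (C ((Pcoeff ν (K + 1) n (j : ℤ) : ℤ) : ℝ) * hpoly ν K a j) := by
    intro j
    push_cast
    simp only [map_add, map_mul, map_sub, map_one]
    ring
  rw [Finset.sum_congr rfl (fun j _ => expand j), Finset.sum_add_distrib]
  rw [Finset.sum_range_succ'
    (fun j => C ((Pcoeff ν (K + 1) n ((j : ℤ) - 1) : ℤ) : ℝ) * hpoly ν K a j) (n + 1)]
  rw [show ((0 : ℕ) : ℤ) - 1 = -1 by norm_num, Pneg ν (K + 1) n (-1) (by norm_num)]
  simp only [Int.cast_zero, map_zero, zero_mul, add_zero]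
  rw [Finset.sum_range_succ
    (fun j => (C (((ν : ℝ) - 1) * (j : ℝ)) - C ((2 * K + n + 1 : ℕ) : ℝ))
        * (C ((Pcoeff ν (K + 1) n (j : ℤ) : ℤ) : ℝ) * hpoly ν K a j)) (n + 1)]
  rw [Ptop ν (K + 1) n ((n + 1 : ℕ) : ℤ) (by push_cast; omega)]
  simp only [Int.cast_zero, map_zero, zero_mul, mul_zero, add_zero]
  have step : ∀ j : ℕ,
      C ((Pcoeff ν (K + 1) n (((j + 1 : ℕ) : ℤ) - 1) : ℤ) : ℝ) * hpoly ν K a (j + 1)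
        + (C (((ν : ℝ) - 1) * (j : ℝ)) - C ((2 * K + n + 1 : ℕ) : ℝ))
            * (C ((Pcoeff ν (K + 1) n (j : ℤ) : ℤ) : ℝ) * hpoly ν K a j)
      = X * (X - 1) * (C (ν : ℝ) * X - 1)
          * derivative (C ((Pcoeff ν (K + 1) n (j : ℤ) : ℤ) : ℝ) * hpoly ν K a j)
        + (C (ν : ℝ) * X * (X - 1) - C ((2 * K + n + 1 : ℕ) : ℝ))
            * (C ((Pcoeff ν (K + 1) n (j : ℤ) : ℤ) : ℝ) * hpoly ν K a j) := by
    intro j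
    rw [show ((j + 1 : ℕ) : ℤ) - 1 = (j : ℤ) by push_cast; ring, hpoly_succ, derivative_mul,
      derivative_C]
    ring
  rw [← Finset.sum_add_distrib, Finset.sum_congr rfl (fun j _ => step j),
    Finset.sum_add_distrib]
  simp only [gpoly, derivative_sum, Finset.mul_sum]

lemma gpoly_dvd (ν K : ℕ) (a : ℤ → ℝ) :
    ∀ n : ℕ, ∃ u : ℝ[X], gpoly ν K a n = X ^ (2 * K + 1 + n) * u := by
  intro n
  induction n with
  | zero =>
    refine ⟨∑ ℓ ∈ Finset.range (3 * (K + 1)), C (a (ℓ : ℤ)) * X ^ ℓ, ?_⟩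
    rw [gpoly]
    rw [Finset.sum_range_one]
    rw [show Pcoeff ν (K + 1) 0 ((0 : ℕ) : ℤ) = 1 from by simp [Pcoeff]]
    rw [hpoly, show fpoly ν K a 0
      = ∑ ℓ ∈ Finset.range (3 * (K + 1)), C (a (ℓ : ℤ)) * X ^ (2 * K + 1 + ℓ) from rfl]
    rw [Finset.mul_sum]
    simp only [Int.cast_one, map_one, one_mul, pow_zero, pow_add]
    rw [Finset.mul_sum]
    apply Finset.sum_congr rfl
    intro ℓ _
    ring
  | succ n ih =>
    obtain ⟨u, hu⟩ := ih
    refine ⟨C ((2 * K + n + 1 : ℕ) : ℝ) * (C (ν : ℝ) * X - C (ν : ℝ) - 1) * u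
      + (X - 1) * (C (ν : ℝ) * X - 1) * derivative u + C (ν : ℝ) * (X - 1) * u, ?_⟩
    rw [gpoly_succ, hu, derivative_mul, derivative_X_pow]
    rw [show 2 * K + 1 + n - 1 = 2 * K + n from by omega]
    rw [show ((2 * K + 1 + n : ℕ) : ℝ) = ((2 * K + n + 1 : ℕ) : ℝ) from by push_cast; ring]
    rw [show 2 * K + 1 + (n + 1) = (2 * K + n) + 2 from by omega,
        show 2 * K + 1 + n = (2 * K + n) + 1 from by omega]
    ring

lemma coeff_pow_mul (F : ℝ[X]) (j T : ℕ) :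
    ((X - 1) ^ j * F).coeff T
      = ∑ r ∈ Finset.range (j + 1),
          (-1 : ℝ) ^ (j - r) * (j.choose r : ℝ) * (if r ≤ T then F.coeff (T - r) else 0) := by
  rw [show ((X : ℝ[X]) - 1) = X + C (-1) from by rw [map_neg, map_one]; ring, add_pow,
    Finset.sum_mul, finset_sum_coeff]
  apply Finset.sum_congr rfl
  intro r _
  have h1 : (X : ℝ[X]) ^ r * (C (-1 : ℝ)) ^ (j - r) * ((j.choose r : ℕ) : ℝ[X]) * F
      = C ((-1 : ℝ) ^ (j - r) * ((j.choose r : ℕ) : ℝ)) * F * X ^ r := by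
    rw [map_mul, map_pow, Polynomial.C_eq_natCast]
    ring
  rw [h1, coeff_mul_X_pow']
  split_ifs with h
  · rw [coeff_C_mul]
  · rw [mul_zero]

/-- Fix `ν ≥ 2`, `k ≥ 1`, and `a_ℓ` (`ℓ ∈ ℤ`) vanishing for
`ℓ < 0` and `ℓ ≥ 3k`.  With `a_ℓ^{(j)}` defined by the recursion
`a_ℓ^{(j)} = ((j−1)ν − (2k+ℓ+j−2))·a_ℓ^{(j−1)} + ν(2k+ℓ+j−2)·a_{ℓ−1}^{(j−1)}`
and `P_j^{(n,k)}` as above, for every `n ≥ 1` and every `0 ≤ m ≤ n−1`: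
`Σ_{j=0}^{n} P_j^{(n,k)} Σ_{r=0}^{m} (−1)^{j−r} binom(j,r) a_{m−r}^{(j)} = 0`. -/
theorem vanishing_lemma
    (ν k : ℕ) (hν : 2 ≤ ν) (hk : 1 ≤ k)
    (a : ℤ → ℝ) (ha : ∀ ℓ : ℤ, ℓ < 0 ∨ 3 * (k : ℤ) ≤ ℓ → a ℓ = 0)
    (A : ℕ → ℤ → ℝ) (hA0 : A 0 = a)
    (hArec : ∀ (j : ℕ) (ℓ : ℤ), A (j + 1) ℓ =
      (((j : ℤ) * ν - (2 * (k : ℤ) + ℓ + ((j : ℤ) + 1) - 2) : ℤ) : ℝ) * A j ℓ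
        + (ν : ℝ) * ((2 * (k : ℤ) + ℓ + ((j : ℤ) + 1) - 2 : ℤ) : ℝ) * A j (ℓ - 1))
    (n : ℕ) (hn : 1 ≤ n) (m : ℕ) (hm : m ≤ n - 1) :
    ∑ j ∈ Finset.range (n + 1), (Pcoeff ν k n (j : ℤ) : ℝ) *
        ∑ r ∈ Finset.range (m + 1),
          (-1 : ℝ) ^ (j + r) * (Nat.choose j r : ℝ) * A j ((m : ℤ) - (r : ℤ)) = 0 := by
  obtain ⟨K, rfl⟩ : ∃ K, k = K + 1 := ⟨k - 1, by omega⟩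
  have hkK : ((K + 1 : ℕ) : ℤ) = (K : ℤ) + 1 := by push_cast; ring
  have ha0 : ∀ ℓ : ℤ, ℓ < 0 → a ℓ = 0 := fun ℓ h => ha ℓ (Or.inl h)
  have hAneg : ∀ (j : ℕ) (ℓ : ℤ), ℓ < 0 → A j ℓ = 0 :=
    Aneg ν (K + 1) a A hA0 ha0 hArec
  have ha' : ∀ ℓ : ℤ, ℓ < 0 ∨ 3 * ((K : ℤ) + 1) ≤ ℓ → a ℓ = 0 := by
    intro ℓ h
    apply ha ℓ
    rcases h with h | h
    · exact Or.inl h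
    · right; push_cast; omega
  have hcoeff : ∀ (j t : ℕ), (fpoly ν K a j).coeff t = A j ((t : ℤ) - (2 * K + 1)) :=
    coeff_fpoly ν (K + 1) K a A hkK ha' hA0 hArec hAneg
  have key : ∀ j : ℕ,
      (∑ r ∈ Finset.range (m + 1),
          (-1 : ℝ) ^ (j + r) * (Nat.choose j r : ℝ) * A j ((m : ℤ) - (r : ℤ)))
        = ((X - 1) ^ j * fpoly ν K a j).coeff (2 * K + 1 + m) := by
    intro j
    rw [coeff_pow_mul]
    set g : ℕ → ℝ := fun r => (-1 : ℝ) ^ (j + r) * (Nat.choose j r : ℝ) * A j ((m : ℤ) - (r : ℤ))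
      with hg
    have e1 : ∑ r ∈ Finset.range (j + 1),
        (-1 : ℝ) ^ (j - r) * (j.choose r : ℝ)
          * (if r ≤ 2 * K + 1 + m then (fpoly ν K a j).coeff (2 * K + 1 + m - r) else 0)
        = ∑ r ∈ Finset.range (j + 1), g r := by
      apply Finset.sum_congr rfl
      intro r hr
      rw [Finset.mem_range] at hr
      have hsign : (-1 : ℝ) ^ (j - r) = (-1 : ℝ) ^ (j + r) := by
        rw [show j + r = (j - r) + 2 * r from by omega, pow_add, pow_mul]
        norm_num
      split_ifs with h
      · rw [hcoeff j (2 * K + 1 + m - r), hsign, hg]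
        have : ((2 * K + 1 + m - r : ℕ) : ℤ) - (2 * K + 1) = (m : ℤ) - (r : ℤ) := by omega
        rw [this]
      · rw [hg]
        simp only
        rw [hAneg j ((m : ℤ) - (r : ℤ)) (by omega)]
        ring
    rw [e1]
    have e2 : ∑ r ∈ Finset.range (j + 1), g r = ∑ r ∈ Finset.range (j + m + 1), g r := by
      apply Finset.sum_subset (Finset.range_subset_range.mpr (by omega))
      intro r _ hr
      rw [Finset.mem_range] at hr
      rw [hg]
      simp only
      rw [Nat.choose_eq_zero_of_lt (by omega)]
      push_cast
      ring
    have e3 : ∑ r ∈ Finset.range (m + 1), g r = ∑ r ∈ Finset.range (j + m + 1), g r := by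
      apply Finset.sum_subset (Finset.range_subset_range.mpr (by omega))
      intro r _ hr
      rw [Finset.mem_range] at hr
      rw [hg]
      simp only
      rw [hAneg j ((m : ℤ) - (r : ℤ)) (by omega)]
      ring
    rw [e2, ← e3]
  rw [Finset.sum_congr rfl (fun j _ => by rw [key j])]
  have hsum : ∑ j ∈ Finset.range (n + 1),
      ((Pcoeff ν (K + 1) n (j : ℤ) : ℤ) : ℝ)
        * ((X - 1) ^ j * fpoly ν K a j).coeff (2 * K + 1 + m)
      = (gpoly ν K a n).coeff (2 * K + 1 + m) := by
    rw [gpoly, finset_sum_coeff]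
    apply Finset.sum_congr rfl
    intro j _
    rw [coeff_C_mul, hpoly]
  rw [hsum]
  obtain ⟨u, hu⟩ := gpoly_dvd ν K a n
  rw [hu, mul_comm, coeff_mul_X_pow', if_neg (by omega)]
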